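/- Young-type bound for perfect matching observables: Let d = 2m be even, n ≥ 1, I ⊆ {1,…,n}, C₀ ∈ ℝ, and let u_1, …, u_n : Ω → ℝ^n be random vectors on a probability space such that all the overlap monomials appearing below are integrable. Define the perfect matching observable f(η) := ℳ(η)^{−1}·𝔼[ Σ_{G∈𝒢_η} P(G) ] for each particle configuration η with d particles. Denote by η^{(1)} the configuration with d particles at site i and none elsewhere, by η^{(2)} the configuration with d particles at site j and none elsewhere, and by η the configuration with m particles at i, m particles at j and none elsewhere. Then there exist constants C₁, C₂, C > 0 depending only on d such that for any i < j: 𝔼[ p_{ij}^d ] ≤ C₁·f(η^{(1)}) + C₂·f(η^{(2)}) + C·f(η). -/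

import Mathlib

/-!
Statement 9 (Bourgade–Yau–Yin I, Lemma 3.3): Young-type bound for the perfect
matching observables.
-/

open MeasureTheory Finset

noncomputable section

attribute [local instance] Classical.propDecidable

/-- The vertex set `𝒱_η` of a particle configuration. -/
def VSet (n : ℕ) (η : Fin n → ℕ) : Type := Σ i : Fin n, Fin (2 * η i)

instance (n : ℕ) (η : Fin n → ℕ) : Fintype (VSet n η) := by
  unfold VSet; infer_instance

/-- A comparison on vertices, used to pick one representative per edge. -/
def vlt {n : ℕ} {η : Fin n → ℕ} (v w : VSet n η) : Prop :=
  v.1 < w.1 ∨ (v.1 = w.1 ∧ (v.2 : ℕ) < (w.2 : ℕ))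

/-- Perfect matchings of the complete graph on `𝒱_η`, as fixed-point-free
involutions. -/
def PMatching (n : ℕ) (η : Fin n → ℕ) : Type :=
  {σ : VSet n η → VSet n η // Function.Involutive σ ∧ ∀ v, σ v ≠ v}

noncomputable instance (n : ℕ) (η : Fin n → ℕ) : Fintype (PMatching n η) := by
  unfold PMatching; exact Fintype.ofFinite _

/-- `ℳ(η) = ∏_i (2η_i)!!`, `(2m)!! = ∏_{k ≤ 2m, k odd} k`. -/
def MM (n : ℕ) (η : Fin n → ℕ) : ℕ :=
  ∏ i : Fin n, ∏ k ∈ Finset.range (η i), (2 * k + 1)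

/-- The overlaps `p_{ij}` of the random vectors `u_1, …, u_n`. -/
def pR {Ω : Type} (n : ℕ) (u : Fin n → Ω → Fin n → ℝ) (I : Finset (Fin n))
    (C₀ : ℝ) (ω : Ω) (i j : Fin n) : ℝ :=
  (∑ α ∈ I, u i ω α * u j ω α) - if i = j then C₀ else 0

/-- `P(G)`, the product of overlaps over the edges of the matching `G`. -/
def PGr {Ω : Type} (n : ℕ) (u : Fin n → Ω → Fin n → ℝ) (I : Finset (Fin n))
    (C₀ : ℝ) {η : Fin n → ℕ} (G : PMatching n η) (ω : Ω) : ℝ :=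
  ∏ v ∈ Finset.univ.filter (fun v : VSet n η => vlt v (G.1 v)),
    pR n u I C₀ ω v.1 (G.1 v).1

/-- The perfect matching observable `f(η) = ℳ(η)⁻¹ 𝔼 ∑_{G ∈ 𝒢_η} P(G)`. -/
def fObs {Ω : Type} [MeasureSpace Ω] (n : ℕ) (u : Fin n → Ω → Fin n → ℝ)
    (I : Finset (Fin n)) (C₀ : ℝ) (η : Fin n → ℕ) : ℝ :=
  ((MM n η : ℕ) : ℝ)⁻¹ * ∫ ω, ∑ G : PMatching n η, PGr n u I C₀ G ω

lemma yb_VSet_ext {n : ℕ} {η : Fin n → ℕ} :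
    ∀ (v w : VSet n η), v.1 = w.1 → ((v.2 : ℕ) = (w.2 : ℕ)) → v = w := by
  rintro ⟨a, x⟩ ⟨b, y⟩ h1 h2
  cases h1
  exact congrArg (Sigma.mk a) (Fin.ext h2)

lemma yb_pR_symm {Ω : Type} (n : ℕ) (u : Fin n → Ω → Fin n → ℝ) (I : Finset (Fin n))
    (C₀ : ℝ) (ω : Ω) (a b : Fin n) :
    pR n u I C₀ ω a b = pR n u I C₀ ω b a := by
  unfold pR
  congr 1
  · exact Finset.sum_congr rfl fun α _ => mul_comm _ _
  · by_cases h : a = b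
    · subst h; rfl
    · rw [if_neg h, if_neg (Ne.symm h)]

def ybSwap (c : ℕ) (a : Fin (2 * c)) : Fin (2 * c) :=
  ⟨if (a : ℕ) % 2 = 0 then (a : ℕ) + 1 else (a : ℕ) - 1, by
    have := a.isLt; split_ifs with h <;> omega⟩

lemma ybSwap_val (c : ℕ) (a : Fin (2 * c)) :
    (ybSwap c a : ℕ) = if (a : ℕ) % 2 = 0 then (a : ℕ) + 1 else (a : ℕ) - 1 := rfl

lemma ybSwap_invol (c : ℕ) (a : Fin (2 * c)) : ybSwap c (ybSwap c a) = a := by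
  apply Fin.ext
  rw [ybSwap_val, ybSwap_val]
  have := a.isLt
  split_ifs <;> omega

lemma ybSwap_ne (c : ℕ) (a : Fin (2 * c)) : ybSwap c a ≠ a := by
  intro h
  have h' := congrArg Fin.val h
  rw [ybSwap_val] at h'
  have := a.isLt
  split_ifs at h' <;> omega

lemma yb_pm_nonempty (n : ℕ) (η : Fin n → ℕ) : Nonempty (PMatching n η) := by
  refine ⟨⟨fun v => ⟨v.1, ybSwap _ v.2⟩, ?_, ?_⟩⟩
  · intro v
    show Sigma.mk v.1 (ybSwap (η v.1) (ybSwap (η v.1) v.2)) = v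
    exact yb_VSet_ext _ v rfl (congrArg Fin.val (ybSwap_invol _ v.2))
  · intro v h
    have h' := congrArg (fun w : VSet n η => (w.2 : ℕ)) h
    have h2 := ybSwap_ne (η v.1) v.2
    exact h2 (Fin.ext h')

lemma yb_card_VSet (n : ℕ) (η : Fin n → ℕ) :
    Fintype.card (VSet n η) = ∑ s : Fin n, 2 * η s := by
  have e : VSet n η ≃ (Σ s : Fin n, Fin (2 * η s)) := Equiv.refl _
  rw [Fintype.card_congr e, Fintype.card_sigma]
  simp

lemma yb_vlt_asymm {n : ℕ} {η : Fin n → ℕ} {v w : VSet n η} (h : vlt v w) : ¬ vlt w v := by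
  simp only [vlt, Fin.lt_def, Fin.ext_iff] at *
  omega

lemma yb_vlt_total {n : ℕ} {η : Fin n → ℕ} (v w : VSet n η) (h : v ≠ w) :
    vlt v w ∨ vlt w v := by
  rcases Nat.lt_trichotomy (v.1 : ℕ) (w.1 : ℕ) with h1 | h1 | h1
  · exact Or.inl (Or.inl h1)
  · have hfst : v.1 = w.1 := Fin.ext h1
    have h2 : (v.2 : ℕ) ≠ (w.2 : ℕ) := fun he => h (yb_VSet_ext v w hfst he)
    rcases Nat.lt_or_ge (v.2 : ℕ) (w.2 : ℕ) with h3 | h3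
    · exact Or.inl (Or.inr ⟨hfst, h3⟩)
    · exact Or.inr (Or.inr ⟨hfst.symm, by omega⟩)
  · exact Or.inr (Or.inl h1)

lemma yb_card_F {n : ℕ} {η : Fin n → ℕ} (G : PMatching n η) :
    2 * (Finset.univ.filter (fun v : VSet n η => vlt v (G.1 v))).card
      = ∑ s : Fin n, 2 * η s := by
  classical
  have hcards : (Finset.univ.filter (fun v : VSet n η => vlt v (G.1 v))).card
      + (Finset.univ.filter (fun v : VSet n η => ¬ vlt v (G.1 v))).card
      = Fintype.card (VSet n η) := by
    rw [Finset.card_filter_add_card_filter_not]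
    exact Finset.card_univ
  have hbij : (Finset.univ.filter (fun v : VSet n η => vlt v (G.1 v))).card
      = (Finset.univ.filter (fun v : VSet n η => ¬ vlt v (G.1 v))).card := by
    apply Finset.card_bij (fun v _ => G.1 v)
    · intro v hv
      simp only [Finset.mem_filter, Finset.mem_univ, true_and] at hv ⊢
      rw [G.2.1 v]
      exact yb_vlt_asymm hv
    · intro a ha b hb hab
      exact G.2.1.injective hab
    · intro w hw
      simp only [Finset.mem_filter, Finset.mem_univ, true_and] at hw
      refine ⟨G.1 w, ?_, G.2.1 w⟩
      simp only [Finset.mem_filter, Finset.mem_univ, true_and, G.2.1 w]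
      rcases yb_vlt_total (G.1 w) w (fun he => G.2.2 w he) with h | h
      · exact h
      · exact absurd h hw
  rw [← yb_card_VSet]
  omega
lemma yb_MM_single (n : ℕ) (i : Fin n) (d : ℕ) :
    MM n (fun s => if s = i then d else 0) = ∏ k ∈ Finset.range d, (2 * k + 1) := by
  unfold MM
  rw [Finset.prod_eq_single i]
  · simp
  · intro b _ hb; simp [hb]
  · simp

lemma yb_MM_pair (n : ℕ) (i j : Fin n) (hne : i ≠ j) (m : ℕ) :
    MM n (fun s => if s = i then m else if s = j then m else 0)
      = (∏ k ∈ Finset.range m, (2 * k + 1)) ^ 2 := by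
  unfold MM
  rw [← Finset.prod_sdiff (Finset.subset_univ ({i, j} : Finset (Fin n)))]
  rw [Finset.prod_eq_one (fun s hs => ?_), one_mul, Finset.prod_pair hne]
  · simp [hne, Ne.symm hne, sq]
  · simp only [Finset.mem_sdiff, Finset.mem_insert, Finset.mem_singleton] at hs
    push_neg at hs
    simp [hs.2.1, hs.2.2]

lemma yb_sum_one (n : ℕ) (η : Fin n → ℕ) (i : Fin n) (d : ℕ) (hηi : η i = d)
    (hη0 : ∀ s, s ≠ i → η s = 0) :
    ∑ s : Fin n, 2 * η s = 2 * d := by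
  rw [Finset.sum_eq_single i]
  · rw [hηi]
  · intro b _ hb; rw [hη0 b hb, mul_zero]
  · intro h; exact absurd (Finset.mem_univ i) h

lemma yb_sum_two (n : ℕ) (η : Fin n → ℕ) (i j : Fin n) (hne : i ≠ j) (m : ℕ)
    (hηi : η i = m) (hηj : η j = m)
    (hη0 : ∀ s, s ≠ i → s ≠ j → η s = 0) :
    ∑ s : Fin n, 2 * η s = 4 * m := by
  rw [← Finset.sum_sdiff (Finset.subset_univ ({i, j} : Finset (Fin n)))]
  rw [Finset.sum_eq_zero (fun s hs => ?_), zero_add, Finset.sum_pair hne]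
  · rw [hηi, hηj]; ring
  · simp only [Finset.mem_sdiff, Finset.mem_insert, Finset.mem_singleton] at hs
    push_neg at hs
    rw [hη0 s hs.2.1 hs.2.2, mul_zero]

lemma yb_vfst_one {n : ℕ} {η : Fin n → ℕ} {i : Fin n}
    (hη0 : ∀ s, s ≠ i → η s = 0) (v : VSet n η) : v.1 = i := by
  by_contra hc
  have := v.2.isLt
  have h0 := hη0 v.1 hc
  omega

lemma yb_vfst_two {n : ℕ} {η : Fin n → ℕ} {i j : Fin n}
    (hη0 : ∀ s, s ≠ i → s ≠ j → η s = 0) (v : VSet n η) : v.1 = i ∨ v.1 = j := by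
  by_contra hc
  push_neg at hc
  have := v.2.isLt
  have h0 := hη0 v.1 hc.1 hc.2
  omega

lemma yb_PGr_single {Ω : Type} (n : ℕ) (u : Fin n → Ω → Fin n → ℝ) (I : Finset (Fin n))
    (C₀ : ℝ) (i : Fin n) (d : ℕ) {η : Fin n → ℕ} (hηi : η i = d)
    (hη0 : ∀ s, s ≠ i → η s = 0)
    (G : PMatching n η) (ω : Ω) :
    PGr n u I C₀ G ω = pR n u I C₀ ω i i ^ d := by
  classical
  have hcard : (Finset.univ.filter (fun v : VSet n η => vlt v (G.1 v))).card = d := by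
    have h1 := yb_card_F G
    have h2 := yb_sum_one n η i d hηi hη0
    omega
  unfold PGr
  rw [Finset.prod_congr rfl
      (fun v _ => by rw [yb_vfst_one hη0 v, yb_vfst_one hη0 (G.1 v)] :
        ∀ v ∈ Finset.univ.filter (fun v : VSet n η => vlt v (G.1 v)),
          pR n u I C₀ ω v.1 (G.1 v).1 = pR n u I C₀ ω i i),
    Finset.prod_const, hcard]
lemma yb_young (d : ℕ) (hd : 1 ≤ d) (ε : ℝ) (hε : 0 < ε) (hε1 : ε ≤ 1)
    (x y : ℝ) (hx : 0 ≤ x) (hy : 0 ≤ y) :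
    y * x ^ (d - 1) ≤ ε * x ^ d + (1 / ε) ^ d * y ^ d := by
  have hxd : x * x ^ (d - 1) = x ^ d := by
    rw [← pow_succ', Nat.sub_add_cancel hd]
  have hyd : y * y ^ (d - 1) = y ^ d := by
    rw [← pow_succ', Nat.sub_add_cancel hd]
  have hεinv : (1:ℝ) ≤ 1 / ε := by
    rw [le_div_iff₀ hε]; linarith
  rcases le_or_gt y (ε * x) with h | h
  · have h1 : y * x ^ (d - 1) ≤ (ε * x) * x ^ (d - 1) :=
      mul_le_mul_of_nonneg_right h (pow_nonneg hx _)
    have h2 : (ε * x) * x ^ (d - 1) = ε * x ^ d := by rw [mul_assoc, hxd]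
    have h3 : 0 ≤ (1 / ε) ^ d * y ^ d := by positivity
    linarith
  · have hxle : x ≤ y / ε := by
      rw [le_div_iff₀ hε]; nlinarith
    have h1 : x ^ (d - 1) ≤ (y / ε) ^ (d - 1) := pow_le_pow_left₀ hx hxle _
    have h2 : y * x ^ (d - 1) ≤ y * (y / ε) ^ (d - 1) := mul_le_mul_of_nonneg_left h1 hy
    have h3 : y * (y / ε) ^ (d - 1) = (1 / ε) ^ (d - 1) * y ^ d := by
      calc y * (y / ε) ^ (d - 1) = y * (y * (1 / ε)) ^ (d - 1) := by
            rw [div_eq_mul_one_div]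
        _ = (1 / ε) ^ (d - 1) * (y * y ^ (d - 1)) := by rw [mul_pow]; ring
        _ = (1 / ε) ^ (d - 1) * y ^ d := by rw [hyd]
    have h4 : (1 / ε) ^ (d - 1) ≤ (1 / ε) ^ d :=
      pow_le_pow_right₀ hεinv (Nat.sub_le d 1)
    have h5 : (1 / ε) ^ (d - 1) * y ^ d ≤ (1 / ε) ^ d * y ^ d :=
      mul_le_mul_of_nonneg_right h4 (pow_nonneg hy d)
    have h6 : 0 ≤ ε * x ^ d := by positivity
    linarith

lemma yb_abs_even_pow (z : ℝ) (k : ℕ) : |z| ^ (2 * k) = z ^ (2 * k) := by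
  rw [← abs_pow]
  exact abs_of_nonneg (Even.pow_nonneg (even_two_mul k) z)

lemma yb_max_pow (x y : ℝ) (k : ℕ) :
    max |x| |y| ^ (2 * k) ≤ x ^ (2 * k) + y ^ (2 * k) := by
  rcases max_cases |x| |y| with ⟨h1, _⟩ | ⟨h1, _⟩ <;> rw [h1, yb_abs_even_pow]
  · have : (0:ℝ) ≤ y ^ (2 * k) := Even.pow_nonneg (even_two_mul k) y
    linarith
  · have : (0:ℝ) ≤ x ^ (2 * k) := Even.pow_nonneg (even_two_mul k) x
    linarith
lemma yb_PGr_mixed {Ω : Type} (n : ℕ) (u : Fin n → Ω → Fin n → ℝ) (I : Finset (Fin n))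
    (C₀ : ℝ) (i j : Fin n) (hij : i < j) (m : ℕ) {η : Fin n → ℕ}
    (hηi : η i = m) (hηj : η j = m) (hη0 : ∀ s, s ≠ i → s ≠ j → η s = 0)
    (G : PMatching n η) :
    ∃ a b c : ℕ, a + b + c = 2 * m ∧
      (∀ ω : Ω, PGr n u I C₀ G ω =
        pR n u I C₀ ω i j ^ c * pR n u I C₀ ω i i ^ a * pR n u I C₀ ω j j ^ b) ∧
      ((∀ v : VSet n η, (G.1 v).1 ≠ v.1) → a = 0 ∧ b = 0) ∧
      (¬ (∀ v : VSet n η, (G.1 v).1 ≠ v.1) → 1 ≤ a + b) := by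
  classical
  have hne : i ≠ j := Fin.ne_of_lt hij
  set F : Finset (VSet n η) := Finset.univ.filter (fun v : VSet n η => vlt v (G.1 v))
    with hFdef
  have hcardF : F.card = 2 * m := by
    have h1 := yb_card_F G
    have h2 := yb_sum_two n η i j hne m hηi hηj hη0
    rw [← hFdef] at h1
    omega
  set Fd : Finset (VSet n η) := F.filter (fun v => (G.1 v).1 = v.1) with hFd
  set Fc : Finset (VSet n η) := F.filter (fun v => ¬ (G.1 v).1 = v.1) with hFc
  set Fdi : Finset (VSet n η) := Fd.filter (fun v => v.1 = i) with hFdi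
  set Fdj : Finset (VSet n η) := Fd.filter (fun v => ¬ v.1 = i) with hFdj
  have hsum1 : Fd.card + Fc.card = F.card :=
    Finset.card_filter_add_card_filter_not _
  have hsum2 : Fdi.card + Fdj.card = Fd.card :=
    Finset.card_filter_add_card_filter_not _
  refine ⟨Fdi.card, Fdj.card, Fc.card, by omega, ?_, ?_, ?_⟩
  · intro ω
    unfold PGr
    rw [← hFdef]
    rw [← Finset.prod_filter_mul_prod_filter_not F (fun v => (G.1 v).1 = v.1)
      (fun v => pR n u I C₀ ω v.1 (G.1 v).1)]
    rw [← hFd, ← hFc]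
    rw [← Finset.prod_filter_mul_prod_filter_not Fd (fun v => v.1 = i)
      (fun v => pR n u I C₀ ω v.1 (G.1 v).1)]
    rw [← hFdi, ← hFdj]
    have hci : ∀ v ∈ Fdi, pR n u I C₀ ω v.1 (G.1 v).1 = pR n u I C₀ ω i i := by
      intro v hv
      rw [hFdi, Finset.mem_filter] at hv
      rw [hFd, Finset.mem_filter] at hv
      rcases hv with ⟨⟨_, hdiag⟩, hi⟩
      rw [hdiag, hi]
    have hcj : ∀ v ∈ Fdj, pR n u I C₀ ω v.1 (G.1 v).1 = pR n u I C₀ ω j j := by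
      intro v hv
      rw [hFdj, Finset.mem_filter] at hv
      rw [hFd, Finset.mem_filter] at hv
      rcases hv with ⟨⟨_, hdiag⟩, hi⟩
      have hj : v.1 = j := (yb_vfst_two hη0 v).resolve_left hi
      rw [hdiag, hj]
    have hcc : ∀ v ∈ Fc, pR n u I C₀ ω v.1 (G.1 v).1 = pR n u I C₀ ω i j := by
      intro v hv
      rw [hFc, Finset.mem_filter] at hv
      rcases hv with ⟨_, hoff⟩
      rcases yb_vfst_two hη0 v with h | h
      · have hGv : (G.1 v).1 = j := by
          rcases yb_vfst_two hη0 (G.1 v) with h' | h'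
          · exact absurd (h'.trans h.symm) hoff
          · exact h'
        rw [h, hGv]
      · have hGv : (G.1 v).1 = i := by
          rcases yb_vfst_two hη0 (G.1 v) with h' | h'
          · exact h'
          · exact absurd (h'.trans h.symm) hoff
        rw [h, hGv, yb_pR_symm]
    rw [Finset.prod_congr rfl hci, Finset.prod_congr rfl hcj, Finset.prod_congr rfl hcc,
      Finset.prod_const, Finset.prod_const, Finset.prod_const]
    ring
  · intro hall
    have hFdempty : Fd = ∅ := by
      rw [hFd, Finset.filter_eq_empty_iff]
      intro v _
      exact hall v
    constructor
    · rw [hFdi, hFdempty, Finset.filter_empty, Finset.card_empty]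
    · rw [hFdj, hFdempty, Finset.filter_empty, Finset.card_empty]
  · intro hnall
    push_neg at hnall
    obtain ⟨v₀, hv₀⟩ := hnall
    have hinv : G.1 (G.1 v₀) = v₀ := G.2.1 v₀
    have hv₀' : (G.1 (G.1 v₀)).1 = (G.1 v₀).1 := by rw [hinv, hv₀]
    have hne0 : v₀ ≠ G.1 v₀ := fun h => G.2.2 v₀ h.symm
    have hFd_ne : Fd.Nonempty := by
      rcases yb_vlt_total v₀ (G.1 v₀) hne0 with h | h
      · exact ⟨v₀, by
          rw [hFd, Finset.mem_filter, hFdef, Finset.mem_filter]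
          exact ⟨⟨Finset.mem_univ _, h⟩, hv₀⟩⟩
      · exact ⟨G.1 v₀, by
          rw [hFd, Finset.mem_filter, hFdef, Finset.mem_filter]
          refine ⟨⟨Finset.mem_univ _, ?_⟩, hv₀'⟩
          rw [hinv]
          exact h⟩
    have := Finset.card_pos.mpr hFd_ne
    omega

set_option maxHeartbeats 1000000 in
/-- **Lemma 3.3 (Young-type bound for perfect matching observables).**
With `d = 2m`, `η⁽¹⁾` (resp. `η⁽²⁾`) the configuration with `d` particles at
site `i` (resp. `j`) and `η` the configuration with `m` particles at each of
`i` and `j`, there are constants `C₁, C₂, C > 0`, depending only on `d`,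
such that `𝔼 p_{ij}^d ≤ C₁ f(η⁽¹⁾) + C₂ f(η⁽²⁾) + C f(η)`. -/
theorem young_bound_perfect_matching_observables
    (m : ℕ) (hm : 1 ≤ m) :
    ∃ C₁ > (0:ℝ), ∃ C₂ > (0:ℝ), ∃ C > (0:ℝ),
    ∀ (n : ℕ) (Ω : Type) (mΩ : MeasureSpace Ω),
      IsProbabilityMeasure (volume : Measure Ω) →
    ∀ (u : Fin n → Ω → Fin n → ℝ) (I : Finset (Fin n)) (C₀ : ℝ) (i j : Fin n),
      i < j →
      (∀ a b c : ℕ, a + b + c ≤ 2 * m →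
        Integrable (fun ω => pR n u I C₀ ω i j ^ a * pR n u I C₀ ω i i ^ b *
          pR n u I C₀ ω j j ^ c)) →
      (∫ ω, pR n u I C₀ ω i j ^ (2 * m)) ≤
        C₁ * fObs n u I C₀ (fun s => if s = i then 2 * m else 0)
        + C₂ * fObs n u I C₀ (fun s => if s = j then 2 * m else 0)
        + C * fObs n u I C₀ (fun s => if s = i then m else if s = j then m else 0) := by
  classical
  -- constants
  set T : ℝ := (((4 * m) ^ (4 * m) : ℕ) : ℝ) with hT
  have hT1 : (1:ℝ) ≤ T := by
    rw [hT]
    exact_mod_cast Nat.one_le_pow _ _ (by omega)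
  have hT0 : (0:ℝ) < T := lt_of_lt_of_le one_pos hT1
  set ε : ℝ := 1 / (2 * T) with hε
  have hε0 : 0 < ε := by rw [hε]; exact div_pos one_pos (by linarith)
  have hε1 : ε ≤ 1 := by
    rw [hε, div_le_one (by linarith)]; linarith
  set Cε : ℝ := ε + (1 / ε) ^ (2 * m) with hCε
  have hCε0 : 0 < Cε := by
    have h1 : (0:ℝ) ≤ (1 / ε) ^ (2 * m) := pow_nonneg (by positivity) _
    rw [hCε]; linarith
  have hD1nat : 0 < ∏ k ∈ Finset.range (2 * m), (2 * k + 1) :=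
    Finset.prod_pos (fun k _ => by omega)
  set D₁ : ℝ := ((∏ k ∈ Finset.range (2 * m), (2 * k + 1) : ℕ) : ℝ) with hD₁
  have hD₁0 : 0 < D₁ := by rw [hD₁]; exact_mod_cast hD1nat
  have hD2nat : 0 < (∏ k ∈ Finset.range m, (2 * k + 1)) ^ 2 :=
    pow_pos (Finset.prod_pos fun k _ => by omega) 2
  set D₂ : ℝ := (((∏ k ∈ Finset.range m, (2 * k + 1)) ^ 2 : ℕ) : ℝ) with hD₂
  have hD₂0 : 0 < D₂ := by rw [hD₂]; exact_mod_cast hD2nat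
  have hTCε0 : (0:ℝ) < 2 * T * Cε := by positivity
  refine ⟨2 * T * Cε * D₁, by positivity, 2 * T * Cε * D₁, by positivity,
    2 * D₂, by positivity, ?_⟩
  intro n Ω mΩ hprob u I C₀ i j hij hint
  letI := mΩ
  clear_value T ε Cε D₁ D₂
  have hne : i ≠ j := Fin.ne_of_lt hij
  -- basic integrability facts
  have int_ij : Integrable (fun ω => pR n u I C₀ ω i j ^ (2 * m)) := by
    have h := hint (2 * m) 0 0 (by omega); simpa using h
  have int_ii : Integrable (fun ω => pR n u I C₀ ω i i ^ (2 * m)) := by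
    have h := hint 0 (2 * m) 0 (by omega); simpa using h
  have int_jj : Integrable (fun ω => pR n u I C₀ ω j j ^ (2 * m)) := by
    have h := hint 0 0 (2 * m) (by omega); simpa using h
  set A : ℝ := ∫ ω, pR n u I C₀ ω i j ^ (2 * m) with hA
  set B : ℝ := ∫ ω, pR n u I C₀ ω i i ^ (2 * m) with hB
  set B' : ℝ := ∫ ω, pR n u I C₀ ω j j ^ (2 * m) with hB'
  have hA0 : 0 ≤ A := integral_nonneg fun ω => Even.pow_nonneg (even_two_mul m) _
  have hB0 : 0 ≤ B := integral_nonneg fun ω => Even.pow_nonneg (even_two_mul m) _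
  have hB'0 : 0 ≤ B' := integral_nonneg fun ω => Even.pow_nonneg (even_two_mul m) _
  -- single-site estimate
  have hsingle : ∀ i₀ : Fin n,
      Integrable (fun ω => pR n u I C₀ ω i₀ i₀ ^ (2 * m)) →
      (∫ ω, pR n u I C₀ ω i₀ i₀ ^ (2 * m)) ≤
        D₁ * fObs n u I C₀ (fun s => if s = i₀ then 2 * m else 0) := by
    intro i₀ hint₀
    have hη0 : ∀ s : Fin n, s ≠ i₀ → (if s = i₀ then 2 * m else 0) = 0 :=
      fun s hs => if_neg hs
    have hηi : (if i₀ = i₀ then 2 * m else 0) = 2 * m := if_pos rfl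
    have hPG : ∀ G : PMatching n (fun s => if s = i₀ then 2 * m else 0),
        PGr n u I C₀ G = fun ω => pR n u I C₀ ω i₀ i₀ ^ (2 * m) :=
      fun G => funext (yb_PGr_single n u I C₀ i₀ (2 * m) hηi hη0 G)
    have hintG : ∀ G ∈ (Finset.univ :
        Finset (PMatching n (fun s => if s = i₀ then 2 * m else 0))),
        Integrable (PGr n u I C₀ G) := by
      intro G _; rw [hPG G]; exact hint₀
    have hint0 : 0 ≤ ∫ ω, pR n u I C₀ ω i₀ i₀ ^ (2 * m) :=
      integral_nonneg fun ω => Even.pow_nonneg (even_two_mul m) _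
    have hcard1 : (1:ℝ) ≤
        (Fintype.card (PMatching n (fun s => if s = i₀ then 2 * m else 0)) : ℝ) := by
      have h := Fintype.card_pos_iff.mpr (yb_pm_nonempty n (fun s => if s = i₀ then 2 * m else 0))
      exact_mod_cast h
    unfold fObs
    rw [integral_finset_sum _ hintG,
      Finset.sum_congr rfl (fun G _ => by rw [hPG G]),
      Finset.sum_const, Finset.card_univ, nsmul_eq_mul, yb_MM_single, ← hD₁,
      ← mul_assoc, mul_inv_cancel₀ hD₁0.ne', one_mul]
    nlinarith [hint0, hcard1]
  have hf1 := hsingle i int_ii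
  have hf2 := hsingle j int_jj
  -- mixed configuration
  set ηm : Fin n → ℕ := fun s => if s = i then m else if s = j then m else 0 with hηm
  have hmix0 : ∀ s : Fin n, s ≠ i → s ≠ j → ηm s = 0 := by
    intro s h1 h2; rw [hηm]; simp only; rw [if_neg h1, if_neg h2]
  have hmixi : ηm i = m := by rw [hηm]; simp
  have hmixj : ηm j = m := by rw [hηm]; simp [Ne.symm hne]
  have hintGm : ∀ G : PMatching n ηm, Integrable (PGr n u I C₀ G) := by
    intro G
    obtain ⟨a, b, c, habc, hPG, -, -⟩ :=
      yb_PGr_mixed n u I C₀ i j hij m hmixi hmixj hmix0 G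
    have h := hint c a b (by omega)
    rw [show PGr n u I C₀ G = _ from funext hPG]
    exact h
  have hXval : ∀ G : PMatching n ηm, (∀ v, (G.1 v).1 ≠ v.1) →
      (∫ ω, PGr n u I C₀ G ω) = A := by
    intro G hall
    obtain ⟨a, b, c, habc, hPG, hcross, -⟩ :=
      yb_PGr_mixed n u I C₀ i j hij m hmixi hmixj hmix0 G
    obtain ⟨ha, hb⟩ := hcross hall
    have hc : c = 2 * m := by omega
    rw [hA]
    have heq : PGr n u I C₀ G = fun ω => pR n u I C₀ ω i j ^ (2 * m) := by
      funext ω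
      rw [hPG ω, ha, hb, hc, pow_zero, pow_zero, mul_one, mul_one]
    rw [heq]
  have hXneg : ∀ G : PMatching n ηm, ¬ (∀ v, (G.1 v).1 ≠ v.1) →
      -(ε * A + Cε * (B + B')) ≤ ∫ ω, PGr n u I C₀ G ω := by
    intro G hnall
    obtain ⟨a, b, c, habc, hPG, -, hab⟩ :=
      yb_PGr_mixed n u I C₀ i j hij m hmixi hmixj hmix0 G
    have hab1 : 1 ≤ a + b := hab hnall
    have hpt : ∀ ω, |PGr n u I C₀ G ω| ≤
        ε * pR n u I C₀ ω i j ^ (2 * m) +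
          Cε * (pR n u I C₀ ω i i ^ (2 * m) + pR n u I C₀ ω j j ^ (2 * m)) := by
      intro ω
      set z := pR n u I C₀ ω i j with hz
      set x := pR n u I C₀ ω i i with hx
      set y := pR n u I C₀ ω j j with hy
      set M : ℝ := max |x| |y| with hM
      set S : ℝ := max |z| M with hS
      have hM0 : (0:ℝ) ≤ M := le_trans (abs_nonneg x) (le_max_left _ _)
      have hS0 : (0:ℝ) ≤ S := le_trans hM0 (le_max_right _ _)
      have hMS : M ≤ S := le_max_right _ _
      have hzS : |z| ≤ S := le_max_left _ _
      have hxM : |x| ≤ M := le_max_left _ _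
      have hyM : |y| ≤ M := le_max_right _ _
      have h3 : S ^ (2 * m) ≤ z ^ (2 * m) + M ^ (2 * m) := by
        have hM2 : (0:ℝ) ≤ M ^ (2 * m) := pow_nonneg hM0 _
        have hz2 : (0:ℝ) ≤ z ^ (2 * m) := Even.pow_nonneg (even_two_mul m) z
        rcases max_cases |z| M with ⟨hh, _⟩ | ⟨hh, _⟩ <;> rw [hS, hh]
        · rw [yb_abs_even_pow]; linarith
        · linarith
      have h4 : M ^ (2 * m) ≤ x ^ (2 * m) + y ^ (2 * m) := yb_max_pow x y m
      clear_value z x y M S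
      have h1 : |PGr n u I C₀ G ω| ≤ M * S ^ (2 * m - 1) := by
        rw [hPG ω, abs_mul, abs_mul, abs_pow, abs_pow, abs_pow, ← hz, ← hx, ← hy]
        calc |z| ^ c * |x| ^ a * |y| ^ b
            ≤ S ^ c * M ^ a * M ^ b := by
              gcongr <;> first | exact abs_nonneg _ | assumption
          _ = M ^ (a + b) * S ^ c := by rw [pow_add]; ring
          _ = (M * M ^ (a + b - 1)) * S ^ c := by
              rw [← pow_succ', Nat.sub_add_cancel hab1]
          _ ≤ (M * S ^ (a + b - 1)) * S ^ c :=
              mul_le_mul_of_nonneg_right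
                (mul_le_mul_of_nonneg_left (pow_le_pow_left₀ hM0 hMS (a + b - 1)) hM0)
                (pow_nonneg hS0 c)
          _ = M * S ^ (2 * m - 1) := by
              rw [mul_assoc, ← pow_add]
              congr 2
              omega
      have h2 : M * S ^ (2 * m - 1) ≤ ε * S ^ (2 * m) + (1 / ε) ^ (2 * m) * M ^ (2 * m) :=
        yb_young (2 * m) (by omega) ε hε0 hε1 S M hS0 hM0
      have h5 : ε * S ^ (2 * m) ≤ ε * (z ^ (2 * m) + M ^ (2 * m)) :=
        mul_le_mul_of_nonneg_left h3 hε0.le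
      have h6 : Cε * M ^ (2 * m) ≤ Cε * (x ^ (2 * m) + y ^ (2 * m)) :=
        mul_le_mul_of_nonneg_left h4 hCε0.le
      have h7 : ε * M ^ (2 * m) + (1 / ε) ^ (2 * m) * M ^ (2 * m) = Cε * M ^ (2 * m) := by
        rw [hCε]; ring
      linarith
    have hbd1 : Integrable (fun ω => ε * pR n u I C₀ ω i j ^ (2 * m)) := by
      exact int_ij.const_mul ε
    have hbd2 : Integrable (fun ω =>
        Cε * (pR n u I C₀ ω i i ^ (2 * m) + pR n u I C₀ ω j j ^ (2 * m))) := by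
      exact (int_ii.add int_jj).const_mul Cε
    have hbd_int : Integrable (fun ω =>
        ε * pR n u I C₀ ω i j ^ (2 * m) +
          Cε * (pR n u I C₀ ω i i ^ (2 * m) + pR n u I C₀ ω j j ^ (2 * m))) := by
      exact hbd1.add hbd2
    have habs : |∫ ω, PGr n u I C₀ G ω| ≤ ∫ ω, |PGr n u I C₀ G ω| := by
      simpa [Real.norm_eq_abs] using
        norm_integral_le_integral_norm (μ := (volume : Measure Ω))
          (fun ω => PGr n u I C₀ G ω)
    have hmono : (∫ ω, |PGr n u I C₀ G ω|) ≤
        ∫ ω, (ε * pR n u I C₀ ω i j ^ (2 * m) +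
          Cε * (pR n u I C₀ ω i i ^ (2 * m) + pR n u I C₀ ω j j ^ (2 * m))) :=
      integral_mono (hintGm G).abs hbd_int hpt
    have hval : (∫ ω, (ε * pR n u I C₀ ω i j ^ (2 * m) +
        Cε * (pR n u I C₀ ω i i ^ (2 * m) + pR n u I C₀ ω j j ^ (2 * m)))) =
        ε * A + Cε * (B + B') := by
      have hsum2 : Integrable (fun ω =>
          pR n u I C₀ ω i i ^ (2 * m) + pR n u I C₀ ω j j ^ (2 * m)) := by
        exact int_ii.add int_jj
      rw [integral_add hbd1 hbd2, integral_const_mul, integral_const_mul,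
        integral_add int_ii int_jj, ← hA, ← hB, ← hB']
    have := neg_abs_le (∫ ω, PGr n u I C₀ G ω)
    linarith
  -- sum over matchings of the mixed configuration
  have hsumf : D₂ * fObs n u I C₀ ηm = ∑ G : PMatching n ηm, ∫ ω, PGr n u I C₀ G ω := by
    unfold fObs
    rw [integral_finset_sum _ (fun G _ => hintGm G), hηm, yb_MM_pair n i j hne m, ← hD₂,
      ← mul_assoc, mul_inv_cancel₀ hD₂0.ne', one_mul]
  set X : Finset (PMatching n ηm) :=
    Finset.univ.filter (fun G : PMatching n ηm => ∀ v, (G.1 v).1 ≠ v.1) with hX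
  set Xc : Finset (PMatching n ηm) :=
    Finset.univ.filter (fun G : PMatching n ηm => ¬ ∀ v, (G.1 v).1 ≠ v.1) with hXc
  have hsplit : (∑ G ∈ X, ∫ ω, PGr n u I C₀ G ω)
      + (∑ G ∈ Xc, ∫ ω, PGr n u I C₀ G ω)
      = ∑ G : PMatching n ηm, ∫ ω, PGr n u I C₀ G ω := by
    rw [hX, hXc]
    exact Finset.sum_filter_add_sum_filter_not _ _ _
  have hXA : (∑ G ∈ X, ∫ ω, PGr n u I C₀ G ω) = (X.card : ℝ) * A := by
    rw [Finset.sum_congr rfl (fun G hG => hXval G (Finset.mem_filter.mp hG).2),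
      Finset.sum_const, nsmul_eq_mul]
  have hXcge : ((Xc.card : ℝ)) * (-(ε * A + Cε * (B + B')))
      ≤ ∑ G ∈ Xc, ∫ ω, PGr n u I C₀ G ω := by
    have h := Finset.card_nsmul_le_sum Xc (fun G => ∫ ω, PGr n u I C₀ G ω)
      (-(ε * A + Cε * (B + B')))
      (fun G hG => hXneg G (Finset.mem_filter.mp hG).2)
    rwa [nsmul_eq_mul] at h
  -- the all-cross matching G₀
  have hcast : ∀ v : VSet n ηm, 2 * ηm v.1 = 2 * ηm (if v.1 = i then j else i) := by
    intro v
    rcases yb_vfst_two hmix0 v with h | h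
    · have e1 : ηm v.1 = m := by rw [h]; exact hmixi
      rw [if_pos h, e1, hmixj]
    · have hvne : v.1 ≠ i := fun hh => hne (hh.symm.trans h)
      have e1 : ηm v.1 = m := by rw [h]; exact hmixj
      rw [if_neg hvne, e1, hmixi]
  have hG₀ : ∃ G₀ : PMatching n ηm, ∀ v, (G₀.1 v).1 ≠ v.1 := by
    have hfst : ∀ v : VSet n ηm,
        ((⟨if v.1 = i then j else i, Fin.cast (hcast v) v.2⟩ : VSet n ηm)).1 ≠ v.1 := by
      intro v
      show (if v.1 = i then j else i) ≠ v.1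
      rcases yb_vfst_two hmix0 v with h | h
      · rw [if_pos h, h]; exact Ne.symm hne
      · have hvne : v.1 ≠ i := fun hh => hne (hh.symm.trans h)
        rw [if_neg hvne]
        exact fun hh => hvne hh.symm
    refine ⟨⟨fun v => ⟨if v.1 = i then j else i, Fin.cast (hcast v) v.2⟩, ?_, ?_⟩, ?_⟩
    · intro v
      apply yb_VSet_ext
      · rcases yb_vfst_two hmix0 v with h | h <;>
          simp [h, hne, Ne.symm hne]
      · simp
    · intro v h
      exact hfst v (congrArg Sigma.fst h)
    · intro v
      exact hfst v
  have hX1 : (1:ℝ) ≤ (X.card : ℝ) := by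
    obtain ⟨G₀, hG₀p⟩ := hG₀
    have : G₀ ∈ X := Finset.mem_filter.mpr ⟨Finset.mem_univ _, hG₀p⟩
    have h := Finset.card_pos.mpr ⟨G₀, this⟩
    exact_mod_cast h
  have hXcT : ((Xc.card : ℝ)) ≤ T := by
    rw [hT]
    have h1 : Xc.card ≤ Fintype.card (PMatching n ηm) := Finset.card_le_univ _
    have h2 : Fintype.card (PMatching n ηm) ≤ Fintype.card (VSet n ηm → VSet n ηm) :=
      Fintype.card_le_of_injective (fun G => G.1) (fun a b h => Subtype.ext h)
    have h3 : Fintype.card (VSet n ηm → VSet n ηm) = (4 * m) ^ (4 * m) := by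
      rw [Fintype.card_fun, yb_card_VSet,
        yb_sum_two n ηm i j hne m hmixi hmixj hmix0]
    have : Xc.card ≤ (4 * m) ^ (4 * m) := le_trans h1 (h3 ▸ h2)
    exact_mod_cast this
  have hP0 : 0 ≤ ε * A + Cε * (B + B') := by positivity
  have hTε : T * ε = 1 / 2 := by
    rw [hε]; field_simp
  -- main estimate for the mixed observable
  have hmain : A / 2 - T * Cε * (B + B') ≤ D₂ * fObs n u I C₀ ηm := by
    rw [hsumf, ← hsplit]
    have e1 : A ≤ (X.card : ℝ) * A := by nlinarith
    have e2 : (Xc.card : ℝ) * (ε * A + Cε * (B + B')) ≤ T * (ε * A + Cε * (B + B')) :=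
      mul_le_mul_of_nonneg_right hXcT hP0
    nlinarith [hXA, hXcge]
  -- conclusion
  have hs1 : 2 * T * Cε * B ≤ 2 * T * Cε * (D₁ * fObs n u I C₀ (fun s => if s = i then 2 * m else 0)) :=
    mul_le_mul_of_nonneg_left hf1 hTCε0.le
  have hs2 : 2 * T * Cε * B' ≤ 2 * T * Cε * (D₁ * fObs n u I C₀ (fun s => if s = j then 2 * m else 0)) :=
    mul_le_mul_of_nonneg_left hf2 hTCε0.le
  nlinarith [hmain, hs1, hs2, hTε, hCε0, hT0]
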